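/- arXiv:1204.0713 — 2 statements merged into one kernel-verified Lean document; each statement's English description precedes it below -/
import Mathlib

section
/- For every Laurent polynomial a ∈ ℂ[t,t⁻¹], the iterated super-bracket {[e_{w₄−w₁}(a), q_{w₁+w₃}], q_{w₁+w₂}} — that is, X·q_{w₁+w₂} + q_{w₁+w₂}·X where X = e_{w₄−w₁}(a)·q_{w₁+w₃} − q_{w₁+w₃}·e_{w₄−w₁}(a) — equals Vir(a). (This is the computation defining the Virasoro element Vir(a) inside the matrix realization of the Cheng–Kac superalgebra.) -/
open LaurentPolynomial Matrix

noncomputable section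

/-- `R = ℂ[t,t⁻¹]`, the algebra of complex Laurent polynomials. -/
abbrev R := LaurentPolynomial ℂ

/-- Differentiation on Laurent polynomials, as a `ℂ`-linear endomorphism:
`D (T n) = n • T (n-1)`, i.e. `D f = f'`. -/
noncomputable def Der : Module.End ℂ R :=
  (Finsupp.lsum ℂ fun n : ℤ =>
    LinearMap.toSpanSingleton ℂ R ((n : ℂ) • LaurentPolynomial.T (n - 1)) :
      (ℤ →₀ ℂ) →ₗ[ℂ] R) ∘ₗ
    ((AddMonoidAlgebra.coeffLinearEquiv ℂ : R ≃ₗ[ℂ] (ℤ →₀ ℂ)) : R →ₗ[ℂ] (ℤ →₀ ℂ))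

/-- Multiplication by `a ∈ R` as a `ℂ`-linear endomorphism `m_a`. -/
noncomputable def mulE (a : R) : Module.End ℂ R := LinearMap.mulLeft ℂ a

/-- The ring of operators `E = End_ℂ(R)`. -/
abbrev E := Module.End ℂ R

/-- 8×8 matrices over `E`, written as 2×2 blocks of 4×4 matrices. -/
abbrev M8 := Matrix (Fin 4 ⊕ Fin 4) (Fin 4 ⊕ Fin 4) E

/-- `b_{ij} = e_{ij} - e_{ji}` (entries are the identity operator); indices 0-based. -/
noncomputable def bMat (i j : Fin 4) : Matrix (Fin 4) (Fin 4) E :=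
  Matrix.single i j 1 - Matrix.single j i 1

/-- `e_{w_i - w_j}(a) = [[e_{ij} m_a, 0],[0, -e_{ji} m_a]]`; indices 0-based. -/
noncomputable def eW (i j : Fin 4) (a : R) : M8 :=
  Matrix.fromBlocks (Matrix.single i j (mulE a)) 0 0
    (-(Matrix.single j i (mulE a)))

/-- `h_{w_i - w_j}(a) = [[(e_{ii}-e_{jj}) m_a, 0],[0, (e_{jj}-e_{ii}) m_a]]`; indices 0-based. -/
noncomputable def hW (i j : Fin 4) (a : R) : M8 :=
  Matrix.fromBlocks
    (Matrix.single i i (mulE a) - Matrix.single j j (mulE a)) 0 0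
    (Matrix.single j j (mulE a) - Matrix.single i i (mulE a))

/-- `φ` on the basis `b_{ij}` (`i < j`) of skew matrices (0-based indices):
`φ(b₁₂) = b₃₄`, `φ(b₁₃) = -b₂₄`, `φ(b₁₄) = b₂₃`, `φ(b₂₃) = b₁₄`, `φ(b₂₄) = -b₁₃`,
`φ(b₃₄) = b₁₂` (the involution `k = k' + k'' ↦ k' - k''`). -/
noncomputable def phiB (i j : Fin 4) : Matrix (Fin 4) (Fin 4) E :=
  if i = 0 ∧ j = 1 then bMat 2 3
  else if i = 0 ∧ j = 2 then -(bMat 1 3)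
  else if i = 0 ∧ j = 3 then bMat 1 2
  else if i = 1 ∧ j = 2 then bMat 0 3
  else if i = 1 ∧ j = 3 then -(bMat 0 2)
  else if i = 2 ∧ j = 3 then bMat 0 1
  else 0

/-- `q_{w_i + w_j} = [[0, b_{ij}],[φ(b_{ij})D, 0]]` for `i < j`; indices 0-based. -/
noncomputable def qP (i j : Fin 4) : M8 :=
  Matrix.fromBlocks 0 (bMat i j) (phiB i j * Matrix.scalar (Fin 4) Der) 0

/-- `q_{-w_i - w_j}(a) = [[0,0],[(e_{ij}+e_{ji}) m_a, 0]]`; indices 0-based. -/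
noncomputable def qM (i j : Fin 4) (a : R) : M8 :=
  Matrix.fromBlocks 0 0
    (Matrix.single i j (mulE a) + Matrix.single j i (mulE a)) 0

/-- `Vir(a) = [[I₄ m_a D + e₁₁ m_{a'}, 0],[0, I₄ m_a D + (I₄ - e₁₁) m_{a'}]]`. -/
noncomputable def Vir (a : R) : M8 :=
  Matrix.fromBlocks
    (Matrix.scalar (Fin 4) (mulE a * Der) + Matrix.single 0 0 (mulE (Der a))) 0 0
    (Matrix.scalar (Fin 4) (mulE a * Der) +
      (Matrix.scalar (Fin 4) (mulE (Der a)) - Matrix.single 0 0 (mulE (Der a))))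


lemma Der_C_mul_T (c : ℂ) (n : ℤ) :
    Der (C c * T n) = c • ((n : ℂ) • T (n - 1)) := by
  rw [← single_eq_C_mul_T]
  show (Finsupp.lsum ℂ fun k : ℤ =>
    LinearMap.toSpanSingleton ℂ R ((k : ℂ) • T (k - 1))) (AddMonoidAlgebra.coeff (AddMonoidAlgebra.single n c)) = _
  rw [AddMonoidAlgebra.coeff_single]
  exact Finsupp.lsum_single (S := ℂ)
    (fun k : ℤ => LinearMap.toSpanSingleton ℂ R ((k : ℂ) • T (k - 1))) n c

lemma smul_eq_C_mul' (e : ℂ) (x : R) : e • x = C e * x := by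
  rw [Algebra.smul_def, ← C_eq_algebraMap]

lemma leib (a b : R) : Der (a * b) = a * Der b + Der a * b := by
  induction a using LaurentPolynomial.induction_on' with
  | add p q hp hq => rw [add_mul, map_add, map_add, hp, hq]; ring
  | C_mul_T n c =>
    induction b using LaurentPolynomial.induction_on' with
    | add p q hp hq => rw [mul_add, map_add, map_add, hp, hq]; ring
    | C_mul_T m d =>
      have h1 : C c * T n * (C d * T m) = C (c * d) * T (n + m) := by
        rw [T_add, _root_.map_mul]; ring
      rw [h1, Der_C_mul_T, Der_C_mul_T, Der_C_mul_T]
      simp only [smul_eq_C_mul']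
      have e1 : (T n * T (m - 1) : R) = T (n + m - 1) := by
        rw [← T_add]; congr 1; ring
      have e2 : (T (n - 1) * T m : R) = T (n + m - 1) := by
        rw [← T_add]; congr 1; ring
      have r1 : C c * T n * (C d * (C (m : ℂ) * T (m - 1)))
          = C c * C d * C (m : ℂ) * (T n * T (m - 1)) := by ring
      have r2 : C c * (C (n : ℂ) * T (n - 1)) * (C d * T m)
          = C c * C (n : ℂ) * C d * (T (n - 1) * T m) := by ring
      rw [r1, r2, e1, e2, ← add_mul, ← mul_assoc]
      congr 1
      simp only [← _root_.map_mul, ← _root_.map_add]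
      congr 1
      push_cast
      ring

lemma negfix1 (x : E) : -1 * -x = x := (neg_one_mul (-x)).trans (neg_neg x)
lemma negfix2 (x : E) : -x * -1 = x := (mul_neg_one (-x)).trans (neg_neg x)

lemma key (a : R) : Der * mulE a = mulE a * Der + mulE (Der a) := by
  apply LinearMap.ext; intro f
  simpa [mulE, Module.End.mul_apply] using leib a f

set_option maxHeartbeats 2000000 in
/-- `{[e_{w₄-w₁}(a), q_{w₁+w₃}], q_{w₁+w₂}} = Vir(a)`
(indices in the paper are 1-based; here 0-based). -/
theorem stmt0 (a : R) :
    (eW 3 0 a * qP 0 2 - qP 0 2 * eW 3 0 a) * qP 0 1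
      + qP 0 1 * (eW 3 0 a * qP 0 2 - qP 0 2 * eW 3 0 a) = Vir a := by
  have k := key a
  simp only [eW, qP, Vir, sub_eq_add_neg, Matrix.fromBlocks_neg,
    Matrix.fromBlocks_multiply, Matrix.fromBlocks_add,
    Matrix.mul_zero, Matrix.zero_mul, add_zero, zero_add, neg_zero,
    Matrix.neg_mul, Matrix.mul_neg, neg_neg]
  refine Matrix.fromBlocks_inj.mpr ⟨?_, ?_, ?_, ?_⟩ <;>
    · refine Matrix.ext fun i j => ?_
      fin_cases i <;> fin_cases j <;>
        (simp (config := { decide := true }) [bMat, phiB, Matrix.mul_apply, Fin.sum_univ_four,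
            Matrix.single_apply_same, Matrix.single_apply_of_ne,
            Matrix.scalar_apply, Matrix.diagonal_apply] <;>
          first
            | noncomm_ring [k]
            | exact negfix1 _
            | exact negfix2 _)

end
end

section
/- Let V be a vector space over ℂ, v ∈ V, e ∈ End_ℂ(V), and M ⊆ End_ℂ(V) a linear subspace. Let m, n be positive integers such that: (i) x₁∘x₂∘⋯∘x_n (v) = 0 for all x₁, …, x_n ∈ M; (ii) e^m (v) = 0; (iii) [[e,x],y] = 0 and [[x,e],e] = 0 for all x, y ∈ M. Then y₁∘y₂∘⋯∘y_{m+n} (v) = 0 whenever each y_i belongs to the subspace [M,e] = {xe − ex : x ∈ M}. -/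
namespace Stmt8Aux

variable {R : Type*} [Ring R] [Algebra ℂ R]

/-- commutator with `e` -/
def dd (e a : R) : R := a * e - e * a

lemma dd_mul (e a b : R) : dd e (a * b) = a * dd e b + dd e a * b := by
  simp only [dd]; noncomm_ring

lemma dd_iter_add (e : R) : ∀ (j : ℕ) (a b : R),
    (dd e)^[j] (a + b) = (dd e)^[j] a + (dd e)^[j] b := by
  intro j
  induction j with
  | zero => simp
  | succ k ih =>
    intro a b
    rw [Function.iterate_succ_apply, Function.iterate_succ_apply,
      Function.iterate_succ_apply]
    rw [show dd e (a + b) = dd e a + dd e b by simp only [dd]; noncomm_ring, ih]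

lemma dd_smul (e : R) (c : ℂ) (a : R) : dd e (c • a) = c • dd e a := by
  simp only [dd, smul_mul_assoc, mul_smul_comm, smul_sub]

lemma dd_iter_const_mul (e z : R) (hz : dd e z = 0) :
    ∀ j w, (dd e)^[j] (z * w) = z * (dd e)^[j] w := by
  intro j
  induction j with
  | zero => simp
  | succ k ih =>
    intro w
    rw [Function.iterate_succ_apply, Function.iterate_succ_apply]
    have h : dd e (z * w) = z * dd e w := by rw [dd_mul, hz, zero_mul, add_zero]
    rw [h, ih]

lemma dd_iter_succ_mul (e x : R) (hx : dd e (dd e x) = 0) :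
    ∀ (k : ℕ) (Q : R), (dd e)^[k+1] (x * Q)
      = x * (dd e)^[k+1] Q + ((k+1 : ℕ) : ℂ) • (dd e x * (dd e)^[k] Q) := by
  intro k
  induction k with
  | zero => intro Q; simp [dd_mul]
  | succ k ih =>
    intro Q
    rw [Function.iterate_succ_apply, dd_mul, dd_iter_add,
      ih (dd e Q), dd_iter_const_mul e (dd e x) hx,
      ← Function.iterate_succ_apply (dd e) (k+1) Q,
      ← Function.iterate_succ_apply (dd e) k Q]
    simp only [Nat.succ_eq_add_one]
    rw [show ((k+1+1 : ℕ) : ℂ) = ((k+1 : ℕ) : ℂ) + 1 by push_cast; ring, add_smul, one_smul,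
      add_assoc]

lemma dd_prod_eq_zero (e : R) : ∀ l : List R, (∀ a ∈ l, dd e a = 0) → dd e l.prod = 0 := by
  intro l
  induction l with
  | nil => intro _; simp [dd]
  | cons x l ih =>
    intro h
    rw [List.prod_cons, dd_mul, ih (fun a ha => h a (List.mem_cons_of_mem _ ha)),
      h x (List.mem_cons_self), mul_zero, zero_mul, add_zero]

lemma dd_iter_prod (e : R) : ∀ l : List R, (∀ x ∈ l, dd e (dd e x) = 0) →
    (dd e)^[l.length] l.prod = ((l.length.factorial : ℕ) : ℂ) • (l.map (dd e)).prod := by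
  intro l
  induction l with
  | nil => simp
  | cons x l ih =>
    intro h
    have hx : dd e (dd e x) = 0 := h x (List.mem_cons_self)
    have hl : ∀ a ∈ l, dd e (dd e a) = 0 := fun a ha => h a (List.mem_cons_of_mem _ ha)
    rw [List.prod_cons, List.length_cons, dd_iter_succ_mul e x hx l.length l.prod,
      Function.iterate_succ_apply', ih hl]
    have hz : dd e ((l.map (dd e)).prod) = 0 := by
      apply dd_prod_eq_zero
      intro a ha
      rcases List.mem_map.mp ha with ⟨b, hb, rfl⟩
      exact hl b hb
    rw [dd_smul, hz, smul_zero, mul_zero, zero_add, List.map_cons, List.prod_cons,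
      mul_smul_comm, smul_smul]
    congr 1
    push_cast [Nat.factorial_succ]
    ring


lemma dd_iter_apply_zero {V : Type*} [AddCommGroup V] [Module ℂ V]
    (e : Module.End ℂ V) (v : V) :
    ∀ (k : ℕ) (a : Module.End ℂ V),
      (∀ j t : ℕ, j + t = k → (e ^ j * a * e ^ t) v = 0) → ((dd e)^[k] a) v = 0 := by
  intro k
  induction k with
  | zero =>
    intro a h
    have := h 0 0 rfl
    simpa using this
  | succ k ih =>
    intro a h
    rw [Function.iterate_succ_apply]
    apply ih
    intro j t hjt
    have : e ^ j * dd e a * e ^ t = e ^ j * a * e ^ (t+1) - e ^ (j+1) * a * e ^ t := by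
      rw [pow_succ e j, pow_succ' e t]
      simp only [dd]
      noncomm_ring
    rw [this, LinearMap.sub_apply, h j (t+1) (by omega), h (j+1) t (by omega), sub_zero]

end Stmt8Aux

open Stmt8Aux in

/-- Lemma 4.10: let `V` be a complex vector space, `v ∈ V`,
`e ∈ End_ℂ(V)`, and `M ⊆ End_ℂ(V)` a linear subspace.  If
(i) every `n`-fold composition of elements of `M` kills `v`,
(ii) `e^m v = 0`, and
(iii) `[[e,x],y] = 0` and `[[x,e],e] = 0` for all `x, y ∈ M`,
then every `(m+n)`-fold composition of elements of `[M,e] = {xe - ex : x ∈ M}`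
kills `v`. -/
theorem stmt8 (V : Type*) [AddCommGroup V] [Module ℂ V]
    (v : V) (e : Module.End ℂ V) (M : Submodule ℂ (Module.End ℂ V))
    (m n : ℕ) (hm : 0 < m) (hn : 0 < n)
    (h1 : ∀ x : Fin n → Module.End ℂ V, (∀ i, x i ∈ M) → (List.ofFn x).prod v = 0)
    (h2 : (e ^ m) v = 0)
    (h3 : ∀ x ∈ M, ∀ y ∈ M, (e * x - x * e) * y - y * (e * x - x * e) = 0)
    (h4 : ∀ x ∈ M, (x * e - e * x) * e - e * (x * e - e * x) = 0) :
    ∀ y : Fin (m + n) → Module.End ℂ V,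
      (∀ i, ∃ x ∈ M, y i = x * e - e * x) → (List.ofFn y).prod v = 0 := by
  intro y hy
  choose x hxM hxy using hy
  -- commutators commute with elements of M
  have hcomm : ∀ x' ∈ M, ∀ y' ∈ M,
      y' * (x' * e - e * x') = (x' * e - e * x') * y' := by
    intro x' hx' y' hy'
    have h := sub_eq_zero.mp (h3 x' hx' y' hy')
    calc y' * (x' * e - e * x') = -(y' * (e * x' - x' * e)) := by noncomm_ring
      _ = -((e * x' - x' * e) * y') := by rw [h]
      _ = (x' * e - e * x') * y' := by noncomm_ring
  -- commutators commute with products of elements of M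
  have hG : ∀ x' ∈ M, ∀ l : List (Module.End ℂ V), (∀ b ∈ l, b ∈ M) →
      l.prod * (x' * e - e * x') = (x' * e - e * x') * l.prod := by
    intro x' hx' l
    induction l with
    | nil => intro _; simp
    | cons b l ih =>
      intro hbl
      rw [List.prod_cons, mul_assoc, ih (fun c hc => hbl c (List.mem_cons_of_mem _ hc)),
        ← mul_assoc, hcomm x' hx' b (hbl b (List.mem_cons_self)), mul_assoc]
  -- moving a power of e past an element of M
  have hF : ∀ x' ∈ M, ∀ k : ℕ,
      x' * e ^ (k+1) = e ^ (k+1) * x' + ((k+1 : ℕ) : ℂ) • ((x' * e - e * x') * e ^ k) := by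
    intro x' hx' k
    induction k with
    | zero => simp
    | succ k ih =>
      have hc : Commute (x' * e - e * x') e := sub_eq_zero.mp (h4 x' hx')
      have hpow : e ^ (k+1) * (x' * e - e * x') = (x' * e - e * x') * e ^ (k+1) :=
        ((hc.pow_right (k+1)).symm).eq
      calc x' * e ^ (k+1+1) = (x' * e ^ (k+1)) * e := by rw [pow_succ, mul_assoc]
        _ = (e ^ (k+1) * x' + ((k+1 : ℕ) : ℂ) • ((x' * e - e * x') * e ^ k)) * e := by rw [ih]
        _ = e ^ (k+1) * (x' * e) + ((k+1 : ℕ) : ℂ) • ((x' * e - e * x') * e ^ (k+1)) := by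
            rw [add_mul, smul_mul_assoc, mul_assoc, mul_assoc, ← pow_succ]
        _ = e ^ (k+1) * (e * x') + (x' * e - e * x') * e ^ (k+1)
              + ((k+1 : ℕ) : ℂ) • ((x' * e - e * x') * e ^ (k+1)) := by
            rw [show e ^ (k+1) * (x' * e)
                = e ^ (k+1) * (e * x') + e ^ (k+1) * (x' * e - e * x') from by noncomm_ring,
              hpow]
        _ = e ^ (k+1+1) * x' + ((k+1+1 : ℕ) : ℂ) • ((x' * e - e * x') * e ^ (k+1)) := by
            rw [show ((k+1+1 : ℕ) : ℂ) = ((k+1 : ℕ) : ℂ) + 1 from by push_cast; ring,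
              add_smul, one_smul, ← mul_assoc, ← pow_succ]
            abel
  -- products of exactly n elements of M kill v
  have hEn : ∀ l : List (Module.End ℂ V), (∀ a ∈ l, a ∈ M) → l.length = n →
      l.prod v = 0 := by
    intro l hl hlen
    subst hlen
    have := h1 l.get (fun i => hl _ (List.get_mem l i))
    rwa [List.ofFn_get] at this
  -- products of at least n elements of M kill v
  have hE : ∀ l : List (Module.End ℂ V), (∀ a ∈ l, a ∈ M) → n ≤ l.length →
      l.prod v = 0 := by
    intro l hl hlen
    rw [← List.prod_take_mul_prod_drop l (l.length - n), Module.End.mul_apply,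
      hEn (l.drop (l.length - n)) (fun a ha => hl a (List.mem_of_mem_drop ha))
        (by rw [List.length_drop]; omega), map_zero]
  -- the key pushing lemma
  have hD : ∀ l : List (Module.End ℂ V), ∀ (t : ℕ) (z : Module.End ℂ V)
      (l'' : List (Module.End ℂ V)), (∀ a ∈ l, a ∈ M) → (∀ a ∈ l'', a ∈ M) →
      n + t ≤ l.length + l''.length → (z * l.prod * e ^ t * l''.prod) v = 0 := by
    intro l
    induction l using List.reverseRecOn with
    | nil =>
      intro t z l'' _ hl'' hlen
      simp only [List.prod_nil, mul_one, Module.End.mul_apply]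
      rw [hE l'' hl'' (by simp at hlen; omega), map_zero, map_zero]
    | append_singleton l' a ihl =>
      intro t z l'' hl hl'' hlen
      have ham : a ∈ M := hl a (by simp)
      have hl' : ∀ b ∈ l', b ∈ M := fun b hb => hl b (by simp [hb])
      match t with
      | 0 =>
        rw [show z * (l' ++ [a]).prod * e ^ 0 * l''.prod = z * ((l' ++ [a]) ++ l'').prod from
          by simp only [pow_zero, mul_one, List.prod_append, List.prod_singleton]
             noncomm_ring,
          Module.End.mul_apply,
          hE _ (by intro b hb; rcases List.mem_append.mp hb with h | h;
                   exact hl b h; exact hl'' b h)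
            (by simp at hlen ⊢; omega), map_zero]
      | (t+1) =>
        have e1 : z * (l' ++ [a]).prod * e ^ (t+1) * l''.prod
            = z * l'.prod * (a * e ^ (t+1)) * l''.prod := by
          rw [List.prod_append, List.prod_singleton]; noncomm_ring
        rw [e1, hF a ham t, mul_add, add_mul, LinearMap.add_apply]
        have hA : (z * l'.prod * (e ^ (t+1) * a) * l''.prod) v = 0 := by
          rw [show z * l'.prod * (e ^ (t+1) * a) * l''.prod
              = z * l'.prod * e ^ (t+1) * (a :: l'').prod from
            by rw [List.prod_cons]; noncomm_ring]
          exact ihl (t+1) z (a :: l'') hl'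
            (by intro b hb; rcases List.mem_cons.mp hb with rfl | h;
                exact ham; exact hl'' b h)
            (by simp at hlen ⊢; omega)
        have hB : (z * l'.prod * (((t+1 : ℕ) : ℂ) • ((a * e - e * a) * e ^ t)) * l''.prod) v
            = 0 := by
          rw [mul_smul_comm, smul_mul_assoc, show z * l'.prod * ((a * e - e * a) * e ^ t)
              = z * (a * e - e * a) * l'.prod * e ^ t from by
            rw [show z * l'.prod * ((a * e - e * a) * e ^ t)
                = z * (l'.prod * (a * e - e * a)) * e ^ t from by noncomm_ring,
              hG a ham l' hl']; noncomm_ring,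
            LinearMap.smul_apply, ihl t (z * (a * e - e * a)) l'' hl' hl''
              (by simp at hlen ⊢; omega), smul_zero]
        rw [hA, hB, add_zero]
  -- the star lemma
  set xs := List.ofFn x with hxs
  have hxs_mem : ∀ a ∈ xs, a ∈ M := by
    intro a ha
    rw [hxs] at ha
    rcases List.mem_ofFn.mp ha with ⟨i, rfl⟩
    exact hxM i
  have hxslen : xs.length = m + n := List.length_ofFn
  have hstar : ∀ j t : ℕ, j + t = m + n → (e ^ j * xs.prod * e ^ t) v = 0 := by
    intro j t hjt
    by_cases hmt : m ≤ t
    · have het : (e ^ t) v = 0 := by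
        rw [show t = (t - m) + m from by omega, pow_add, Module.End.mul_apply, h2, map_zero]
      rw [Module.End.mul_apply, Module.End.mul_apply, het, map_zero, map_zero]
    · have := hD xs t (e ^ j) [] hxs_mem (by simp) (by rw [hxslen]; simp; omega)
      simpa using this
  have hiter : ((dd e)^[m+n] xs.prod) v = 0 :=
    dd_iter_apply_zero e v (m+n) xs.prod hstar
  have hdd2 : ∀ a ∈ xs, dd e (dd e a) = 0 := by
    intro a ha
    rw [hxs] at ha
    rcases List.mem_ofFn.mp ha with ⟨i, rfl⟩
    simpa only [dd] using h4 (x i) (hxM i)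
  have hmap : xs.map (dd e) = List.ofFn y := by
    rw [hxs, List.map_ofFn]
    congr 1
    funext i
    simp only [Function.comp_apply, dd, (hxy i).symm]
  have hprod := dd_iter_prod e xs hdd2
  rw [hxslen, hmap] at hprod
  rw [hprod, LinearMap.smul_apply] at hiter
  have hfac : (((m+n).factorial : ℕ) : ℂ) ≠ 0 :=
    Nat.cast_ne_zero.mpr (Nat.factorial_ne_zero (m+n))
  exact (smul_eq_zero.mp hiter).resolve_left hfac
end
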